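/- There exist a function f⁰ ∈ C^∞(ℓ²) (i.e. all iterated coordinatewise partial derivatives of f⁰ of every order exist and are continuous on ℓ²) and a point z₀ ∈ ℓ² such that f⁰ is not Fréchet differentiable at z₀; that is, there is no continuous real-linear map L : ℓ² → ℂ with lim_{h→0} |f⁰(z₀ + h) − f⁰(z₀) − L(h)| / ||h|| = 0. -/

import Mathlib

open MeasureTheory Filter Metric Set
open scoped ENNReal NNReal Topology ComplexOrder

noncomputable section


noncomputable section

abbrev H : Type := lp (fun _ : ℕ => ℂ) 2

/-- The direction vector: `(true, j) ↦ e_j` (the `x_j` direction) and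
`(false, j) ↦ √-1 • e_j` (the `y_j` direction). -/
noncomputable def dir : Bool × ℕ → H :=
  fun d => if d.1 then lp.single 2 d.2 (1 : ℂ) else lp.single 2 d.2 Complex.I

/-- The partial derivative of `f` at `z` in the direction `v` (junk value if it does not exist):
`lim_{ℝ ∋ τ → 0} (f (z + τ • v) - f z)/τ`. -/
noncomputable def pder (v : H) (f : H → ℂ) (z : H) : ℂ :=
  deriv (fun τ : ℝ => f (z + τ • v)) 0

/-- Existence of the partial derivative of `f` at `z` in the direction `v`. -/
def HasPD (v : H) (f : H → ℂ) (z : H) : Prop :=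
  DifferentiableAt ℝ (fun τ : ℝ => f (z + τ • v)) 0

/-- `coordD (true, j) = D_{x_j}`, `coordD (false, j) = D_{y_j}`. -/
noncomputable def coordD (d : Bool × ℕ) (f : H → ℂ) : H → ℂ := pder (dir d) f

/-- Iterated coordinatewise partial derivatives. -/
noncomputable def iterD : List (Bool × ℕ) → (H → ℂ) → H → ℂ
  | [], f => f
  | d :: L, f => coordD d (iterD L f)

/-- `f ∈ C^k(V)` : all partial derivatives of order `< k` exist on `V`, and all iterated
partial derivatives of order `≤ k` are continuous on `V`. -/
def MemCk (V : Set H) (k : ℕ) (f : H → ℂ) : Prop :=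
  (∀ L : List (Bool × ℕ), L.length ≤ k → ContinuousOn (iterD L f) V) ∧
  (∀ L : List (Bool × ℕ), L.length < k → ∀ d : Bool × ℕ, ∀ z ∈ V, HasPD (dir d) (iterD L f) z)

/-- `f ∈ C^∞(V)`. -/
def MemCinf (V : Set H) (f : H → ℂ) : Prop := ∀ k : ℕ, MemCk V k f

/-- `f ∈ C^k_b(V)` : moreover `f` and its partial derivatives up to order `k` are bounded. -/
def MemCkb (V : Set H) (k : ℕ) (f : H → ℂ) : Prop :=
  MemCk V k f ∧ ∀ L : List (Bool × ℕ), L.length ≤ k → ∃ M : ℝ, ∀ z ∈ V, ‖iterD L f z‖ ≤ M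

/-- `S ⊂∘ V` : `S` is uniformly included in `V`. -/
def UnifIncl (S V : Set H) : Prop :=
  ∃ r R : ℝ, 0 < r ∧ 0 < R ∧ (∀ z ∈ S, Metric.ball z r ⊆ V) ∧ S ⊆ Metric.ball 0 R

/-- The support of `f` relative to `V` (the closure, in the subspace topology of `V`,
of `{z ∈ V | f z ≠ 0}`). -/
def suppIn (V : Set H) (f : H → ℂ) : Set H := V ∩ closure {z | z ∈ V ∧ f z ≠ 0}

/-- `f ∈ C^k_0(V)`. -/
def MemCkZero (V : Set H) (k : ℕ) (f : H → ℂ) : Prop :=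
  MemCkb V k f ∧ UnifIncl (suppIn V f) V

/-- `f ∈ C^∞_0(V)`. -/
def MemCinfZero (V : Set H) (f : H → ℂ) : Prop := ∀ k : ℕ, MemCkZero V k f

/-- `∂_j f`. -/
noncomputable def pd (j : ℕ) (f : H → ℂ) (z : H) : ℂ :=
  (coordD (true, j) f z - Complex.I * coordD (false, j) f z) / 2

/-- `∂̄_j f`. -/
noncomputable def dbar (j : ℕ) (f : H → ℂ) (z : H) : ℂ :=
  (coordD (true, j) f z + Complex.I * coordD (false, j) f z) / 2

/-- `δ_j f = ∂_j f - (z̄_j/(2 a_j²)) f`. -/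
noncomputable def deltaOp (a : ℕ → ℝ) (j : ℕ) (f : H → ℂ) (z : H) : ℂ :=
  pd j f z - (starRingEnd ℂ) (z j) / (2 * (a j : ℂ) ^ 2) * f z

/-- The boundedness condition defining `C¹_F(V)`:
`sup_E (|f| + ∑_i (|D_{x_i} f|² + |D_{y_i} f|²)) < ∞` for every `E ⊂∘ V`. -/
def FBound (V : Set H) (f : H → ℂ) : Prop :=
  ∀ E : Set H, UnifIncl E V → ∃ M : ℝ, ∀ z ∈ E,
    ENNReal.ofReal ‖f z‖ +
      ∑' j : ℕ, (ENNReal.ofReal (‖coordD (true, j) f z‖ ^ 2) +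
        ENNReal.ofReal (‖coordD (false, j) f z‖ ^ 2)) ≤ ENNReal.ofReal M

/-- `f ∈ C¹_F(V)`. -/
def MemC1F (V : Set H) (f : H → ℂ) : Prop := MemCk V 1 f ∧ FBound V f

/-- `f ∈ C^∞_{0,F}(V) = C^∞_0(V) ∩ C¹_F(V)`. -/
def MemC0F (V : Set H) (f : H → ℂ) : Prop := MemCinfZero V f ∧ MemC1F V f

/-- Iterated Wirtinger derivatives: `(true, j) ↦ ∂_j`, `(false, j) ↦ ∂̄_j`. -/
noncomputable def wIter : List (Bool × ℕ) → (H → ℂ) → H → ℂ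
  | [], f => f
  | (b, j) :: L, f => if b then pd j (wIter L f) else dbar j (wIter L f)

/-- `f ∈ C^∞_{0,F^∞}(V)` : `f ∈ C^∞_0(V)` and `∂_α ∂̄_β f ∈ C¹_F(V)` for all
finitely supported multi-indices `α`, `β`. -/
def MemC0Finf (V : Set H) (f : H → ℂ) : Prop :=
  MemCinfZero V f ∧
  ∀ Lα Lβ : List ℕ,
    MemC1F V (wIter (Lα.map (fun i => (true, i)) ++ Lβ.map (fun j => (false, j))) f)

/-- A real-valued function regarded as a complex-valued one. -/
def cplx (φ : H → ℝ) : H → ℂ := fun z => (φ z : ℂ)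

/-- The Levi form `∑_{1 ≤ i,j ≤ n} (∂_i ∂̄_j η)(z) ζ_i conj(ζ_j)`. -/
noncomputable def herm (η : H → ℂ) (n : ℕ) (z : H) (ζ : ℕ → ℂ) : ℂ :=
  ∑ i ∈ Finset.range n, ∑ j ∈ Finset.range n,
    pd i (dbar j η) z * ζ i * (starRingEnd ℂ) (ζ j)

/-- Plurisubharmonicity inequality (the order on `ℂ` is the `ComplexOrder`). -/
def PSH (V : Set H) (η : H → ℂ) : Prop :=
  ∀ n : ℕ, ∀ z ∈ V, ∀ ζ : ℕ → ℂ, 0 ≤ herm η n z ζ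

/-- `α` is an exhaustion function of `V`. -/
def Exhausts (V : Set H) (α : H → ℝ) : Prop :=
  ∀ τ : ℝ, UnifIncl {z | z ∈ V ∧ α z ≤ τ} V

/-- `η` is a plurisubharmonic exhaustion function of `V` of class `C^∞_F(V)`. -/
def IsPSHExhaustion (V : Set H) (η : H → ℝ) : Prop :=
  MemCinf V (cplx η) ∧ FBound V (cplx η) ∧ Exhausts V η ∧ PSH V (cplx η)

/-- `V` is a pseudo-convex domain in `ℓ²`. -/
def Pseudoconvex (V : Set H) : Prop :=
  IsOpen V ∧ V.Nonempty ∧ ∃ η : H → ℝ, IsPSHExhaustion V η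

/-- `d(E₁, E₂)`, with value `∞` when either set is empty. -/
noncomputable def setEDist (E₁ E₂ : Set H) : ℝ≥0∞ :=
  ⨅ z₁ ∈ E₁, ⨅ z₂ ∈ E₂, edist z₁ z₂

/-- `d_V(S) = min{d(S, ∂V), 1/sup_{z ∈ S} ‖z‖}` (conventions `1/0 = ∞`, `1/∞ = 0`). -/
noncomputable def dV (V S : Set H) : ℝ≥0∞ :=
  min (setEDist S (frontier V)) (⨆ z ∈ S, (‖z‖₊ : ℝ≥0∞))⁻¹

/-- The Gaussian probability measure `𝒩_σ` on `ℂ`. -/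
noncomputable def gauss (σ : ℝ) : Measure ℂ :=
  volume.withDensity fun z =>
    ENNReal.ofReal ((2 * Real.pi * σ ^ 2)⁻¹ * Real.exp (-(z.re ^ 2 + z.im ^ 2) / (2 * σ ^ 2)))

/-- `P` is the Borel probability measure on `ℓ²` induced by the product of the Gaussian
measures `𝒩_{a_i}`, characterized through its finite-dimensional cylinder marginals. -/
def IsGaussMeasure [MeasurableSpace H] (a : ℕ → ℝ) (P : Measure H) : Prop :=
  IsProbabilityMeasure P ∧
  ∀ (n : ℕ) (E : ℕ → Set ℂ), (∀ i, MeasurableSet (E i)) →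
    P {z : H | ∀ i < n, z i ∈ E i} = ∏ i ∈ Finset.range n, gauss (a i) (E i)



noncomputable def tt (n : ℕ) : ℝ := (2:ℝ)⁻¹ ^ (n+1)

lemma tt_pos (n : ℕ) : 0 < tt n := by unfold tt; positivity

noncomputable def BB (n : ℕ) : ContDiffBump ((tt n : ℂ)) :=
  ⟨tt n / 4, tt n / 2, by have := tt_pos n; linarith, by have := tt_pos n; linarith⟩

noncomputable def gg (n : ℕ) : ℂ → ℂ := fun w => ((tt n * BB n w : ℝ) : ℂ)

lemma gg_smooth (n : ℕ) : ContDiff ℝ (⊤:ℕ∞) (gg n) :=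
  Complex.ofRealCLM.contDiff.comp (contDiff_const.mul ((BB n).contDiff (n := ⊤)))

lemma gg_norm (n w) : ‖gg n w‖ ≤ tt n := by
  rw [gg, Complex.norm_real, Real.norm_eq_abs, abs_mul, abs_of_pos (tt_pos n),
    abs_of_nonneg ((BB n).nonneg' w)]
  nlinarith [(BB n).le_one (x := w), (BB n).nonneg' w, tt_pos n]

lemma gg_zero_far (n : ℕ) {w : ℂ} (hw : tt n / 2 ≤ dist w ((tt n : ℂ))) : gg n w = 0 := by
  have hB : (BB n) w = 0 := (BB n).zero_of_le_dist hw
  simp [gg, hB]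

lemma gg_zero (n : ℕ) {w : ℂ} (hw : ‖w‖ ≤ tt n / 2) : gg n w = 0 := by
  apply gg_zero_far
  have h2 : ‖(tt n : ℂ)‖ - ‖w‖ ≤ ‖(tt n : ℂ) - w‖ := norm_sub_norm_le _ _
  rw [Complex.norm_real, Real.norm_eq_abs, abs_of_pos (tt_pos n)] at h2
  rw [dist_comm, dist_eq_norm]
  linarith

lemma gg_at (n : ℕ) : gg n ((tt n : ℂ)) = tt n := by
  have hB : (BB n) ((tt n : ℂ)) = 1 :=
    (BB n).one_of_mem_closedBall (Metric.mem_closedBall_self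
      (by have := tt_pos n; show (0:ℝ) ≤ tt n / 4; linarith))
  simp [gg, hB]

lemma tt_summable : Summable tt := by
  have := (summable_geometric_of_lt_one (by norm_num : (0:ℝ) ≤ 2⁻¹)
    (by norm_num : (2:ℝ)⁻¹ < 1)).mul_right ((2:ℝ)⁻¹)
  exact this.congr fun n => by simp [tt, pow_succ]

noncomputable def cdir (b : Bool) : ℂ := if b then 1 else Complex.I

lemma dir_eq (d : Bool × ℕ) : dir d = lp.single 2 d.2 (cdir d.1) := by
  cases d with
  | mk b j => cases b <;> rfl

lemma coord_update (z : H) (τ : ℝ) (j : ℕ) (c : ℂ) (m : ℕ) :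
    (z + τ • (lp.single 2 j c : H)) m = z m + τ • (if m = j then c else 0) := by
  have h1 : (z + τ • (lp.single 2 j c : H)) m = z m + (τ • (lp.single 2 j c : H)) m := by
    rw [lp.coeFn_add]; rfl
  have h2 : (τ • (lp.single 2 j c : H)) m = τ • ((lp.single 2 j c : H) m) := by
    rw [lp.coeFn_smul]; rfl
  rw [h1, h2]
  congr 1
  by_cases h : m = j
  · subst h; rw [lp.single_apply_self, if_pos rfl]
  · rw [lp.single_apply_ne 2 j _ h, if_neg h]

lemma continuous_eval (j : ℕ) : Continuous (fun z : H => z j) := by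
  have : LipschitzWith 1 (fun z : H => z j) := by
    intro x y
    simp only [edist_dist, ENNReal.coe_one, one_mul]
    rw [ENNReal.ofReal_le_ofReal_iff dist_nonneg]
    have hxy : x j - y j = (x - y) j := by rw [lp.coeFn_sub]; rfl
    rw [dist_eq_norm, dist_eq_norm, hxy]
    exact lp.norm_apply_le_norm (by norm_num) (x - y) j
  exact this.continuous

noncomputable def ff : H → ℂ := fun z => ∑' n, gg n (z n)

lemma summable_gg (w : ℕ → ℂ) : Summable (fun n => gg n (w n)) :=
  Summable.of_norm_bounded tt_summable (fun n => gg_norm n (w n))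

lemma ff_continuous : Continuous ff :=
  continuous_tsum (fun n => (gg_smooth n).continuous.comp (continuous_eval n))
    tt_summable (fun n z => gg_norm n (z n))

lemma ff_line (z : H) (j : ℕ) (c : ℂ) (τ : ℝ) :
    ff (z + τ • (lp.single 2 j c : H)) = ff z + (gg j (z j + τ • c) - gg j (z j)) := by
  set w : H := z + τ • (lp.single 2 j c : H) with hw
  have hwj : w j = z j + τ • c := by rw [hw, coord_update, if_pos rfl]
  have hwm : ∀ m ≠ j, w m = z m := fun m hm => by
    rw [hw, coord_update, if_neg hm, smul_zero, add_zero]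
  have key : ∑' m, (gg m (w m) - gg m (z m)) = gg j (w j) - gg j (z j) :=
    tsum_eq_single j (fun m hm => by rw [hwm m hm, sub_self])
  have hsub := Summable.tsum_sub (summable_gg (fun m => w m)) (summable_gg (fun m => z m))
  have : ff w - ff z = gg j (w j) - gg j (z j) := by
    rw [ff, ff, ← hsub, key]
  rw [← hwj]
  linear_combination this

lemma line_hasDerivAt (h : ℂ → ℂ) (hh : Differentiable ℝ h) (w c : ℂ) :
    HasDerivAt (fun τ : ℝ => h (w + τ • c)) (fderiv ℝ h w c) 0 := by
  have h1 : HasDerivAt (fun τ : ℝ => w + τ • c) ((1:ℝ) • c) 0 :=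
    ((hasDerivAt_id (0:ℝ)).smul_const c).const_add w
  rw [one_smul] at h1
  have h2 := (hh (w + (0:ℝ) • c)).hasFDerivAt.comp_hasDerivAt 0 h1
  simpa [Function.comp_def] using h2

def SC (F : H → ℂ) : Prop :=
  ∃ (j : ℕ) (h : ℂ → ℂ), ContDiff ℝ (⊤:ℕ∞) h ∧ F = fun z => h (z j)

lemma fderiv_apply_smooth {h : ℂ → ℂ} (hh : ContDiff ℝ (⊤:ℕ∞) h) (c : ℂ) :
    ContDiff ℝ (⊤:ℕ∞) (fun w => fderiv ℝ h w c) :=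
  (ContinuousLinearMap.apply ℝ ℂ c).contDiff.comp
    (hh.fderiv_right (le_refl _))

lemma ff_hasPD (d : Bool × ℕ) (z : H) : HasPD (dir d) ff z := by
  rw [HasPD, dir_eq]
  have : (fun τ : ℝ => ff (z + τ • (lp.single 2 d.2 (cdir d.1) : H)))
      = fun τ : ℝ => ff z + (gg d.2 (z d.2 + τ • cdir d.1) - gg d.2 (z d.2)) := by
    funext τ; exact ff_line z d.2 (cdir d.1) τ
  rw [this]
  exact ((((line_hasDerivAt (gg d.2) ((gg_smooth d.2).differentiable (by simp)) (z d.2)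
    (cdir d.1)).sub_const _).const_add _)).differentiableAt

lemma ff_coordD (d : Bool × ℕ) :
    coordD d ff = fun z => fderiv ℝ (gg d.2) (z d.2) (cdir d.1) := by
  funext z
  rw [coordD, pder, dir_eq]
  have : (fun τ : ℝ => ff (z + τ • (lp.single 2 d.2 (cdir d.1) : H)))
      = fun τ : ℝ => ff z + (gg d.2 (z d.2 + τ • cdir d.1) - gg d.2 (z d.2)) := by
    funext τ; exact ff_line z d.2 (cdir d.1) τ
  rw [this]
  exact ((((line_hasDerivAt (gg d.2) ((gg_smooth d.2).differentiable (by simp)) (z d.2)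
    (cdir d.1)).sub_const _).const_add _)).deriv

lemma sc_coordD_ff (d : Bool × ℕ) : SC (coordD d ff) :=
  ⟨d.2, fun w => fderiv ℝ (gg d.2) w (cdir d.1),
    fderiv_apply_smooth (gg_smooth d.2) _, ff_coordD d⟩

lemma sc_line {F : H → ℂ} (hF : SC F) (d : Bool × ℕ) (z : H) :
    ∃ (j : ℕ) (h : ℂ → ℂ) (e : ℂ), ContDiff ℝ (⊤:ℕ∞) h ∧
      (fun τ : ℝ => F (z + τ • dir d)) = (fun τ : ℝ => h (z j + τ • e)) ∧
      coordD d F = fun z' => fderiv ℝ h (z' j) e := by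
  obtain ⟨j, h, hh, rfl⟩ := hF
  refine ⟨j, h, if j = d.2 then cdir d.1 else 0, hh, ?_, ?_⟩
  · funext τ
    rw [dir_eq]
    show h ((z + τ • (lp.single 2 d.2 (cdir d.1) : H)) j) = _
    rw [coord_update]
  · funext z'
    rw [coordD, pder, dir_eq]
    have : (fun τ : ℝ => h ((z' + τ • (lp.single 2 d.2 (cdir d.1) : H)) j))
        = fun τ : ℝ => h (z' j + τ • (if j = d.2 then cdir d.1 else 0)) := by
      funext τ; rw [coord_update]
    rw [this]
    exact (line_hasDerivAt h (hh.differentiable (by simp)) (z' j) _).deriv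

lemma sc_hasPD {F : H → ℂ} (hF : SC F) (d : Bool × ℕ) (z : H) : HasPD (dir d) F z := by
  obtain ⟨j, h, e, hh, hline, -⟩ := sc_line hF d z
  rw [HasPD, hline]
  exact (line_hasDerivAt h (hh.differentiable (by simp)) (z j) e).differentiableAt

lemma sc_coordD {F : H → ℂ} (hF : SC F) (d : Bool × ℕ) : SC (coordD d F) := by
  obtain ⟨j, h, e, hh, -, hcd⟩ := sc_line hF d 0
  exact ⟨j, fun w => fderiv ℝ h w e, fderiv_apply_smooth hh e, hcd⟩

lemma sc_continuous {F : H → ℂ} (hF : SC F) : Continuous F := by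
  obtain ⟨j, h, hh, rfl⟩ := hF
  exact hh.continuous.comp (continuous_eval j)

lemma iterD_good (L : List (Bool × ℕ)) : iterD L ff = ff ∨ SC (iterD L ff) := by
  induction L with
  | nil => exact Or.inl rfl
  | cons d L ih =>
    right
    rcases ih with h | h
    · rw [iterD, h]; exact sc_coordD_ff d
    · exact sc_coordD h d

/-- There exists `f⁰ ∈ C^∞(ℓ²)` and a point `z₀ ∈ ℓ²` at which `f⁰` is not
Fréchet differentiable (as a map of real Banach spaces). -/
theorem smooth_not_frechet_differentiable :
    ∃ (f : H → ℂ) (z₀ : H), MemCinf Set.univ f ∧ ¬ DifferentiableAt ℝ f z₀ := by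
  refine ⟨ff, 0, ?_, ?_⟩
  · intro k
    constructor
    · intro L _
      rcases iterD_good L with h | h
      · rw [h]; exact ff_continuous.continuousOn
      · exact (sc_continuous h).continuousOn
    · intro L _ d z _
      rcases iterD_good L with h | h
      · rw [h]; exact ff_hasPD d z
      · exact sc_hasPD h d z
  · intro hD
    have ff0 : ff 0 = 0 := by
      have h0 : ∀ n : ℕ, ((0 : H) n) = (0 : ℂ) := fun n => by rw [lp.coeFn_zero]; rfl
      have : (fun n => gg n ((0 : H) n)) = fun _ => (0 : ℂ) := by
        funext n
        rw [h0 n]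
        exact gg_zero n (by rw [norm_zero]; linarith [tt_pos n])
      rw [ff, this, tsum_zero]
    set Lm := fderiv ℝ ff 0 with hLm
    have hF := hD.hasFDerivAt
    have hlo := hasFDerivAt_iff_isLittleO_nhds_zero.1 hF
    have hsmall := hlo.def (by norm_num : (0:ℝ) < 4⁻¹)
    set e : ℕ → H := fun n => lp.single 2 n ((tt n : ℂ)) with he
    set e' : ℕ → H := fun n => lp.single 2 n ((2 * tt n : ℂ)) with he'
    have hnorm_e : ∀ n, ‖e n‖ = tt n := by
      intro n
      have := lp.norm_single (p := 2) (E := fun _ : ℕ => ℂ) (by norm_num)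
        n ((tt n : ℂ))
      rw [he]
      simpa [Complex.norm_real, abs_of_pos (tt_pos n)] using this
    have hnorm_e' : ∀ n, ‖e' n‖ = 2 * tt n := by
      intro n
      have := lp.norm_single (p := 2) (E := fun _ : ℕ => ℂ) (by norm_num)
        n ((2 * tt n : ℂ))
      rw [he']
      simpa [Complex.norm_real, abs_of_pos (tt_pos n), abs_of_pos] using this
    have htt0 : Tendsto tt atTop (nhds 0) := by
      have h1 : Tendsto (fun n : ℕ => ((2:ℝ)⁻¹) ^ n) atTop (nhds 0) :=
        tendsto_pow_atTop_nhds_zero_of_lt_one (by norm_num) (by norm_num)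
      exact h1.comp (tendsto_add_atTop_nat 1)
    have hte : Tendsto e atTop (nhds 0) := by
      rw [tendsto_zero_iff_norm_tendsto_zero]
      simpa [hnorm_e] using htt0
    have hte' : Tendsto e' atTop (nhds 0) := by
      rw [tendsto_zero_iff_norm_tendsto_zero]
      have : Tendsto (fun n => 2 * tt n) atTop (nhds (2 * 0)) := htt0.const_mul 2
      simpa [hnorm_e'] using this
    have ffe : ∀ n, ff (e n) = tt n := by
      intro n
      have hcoord : ∀ m, m ≠ n → gg m ((e n) m) = 0 := by
        intro m hm
        rw [he]
        simp only
        rw [lp.single_apply_ne 2 n _ hm]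
        exact gg_zero m (by rw [norm_zero]; linarith [tt_pos m])
      rw [ff]
      rw [tsum_eq_single n hcoord]
      rw [he]
      simp only
      rw [lp.single_apply_self, gg_at]
    have ffe' : ∀ n, ff (e' n) = 0 := by
      intro n
      have : (fun m => gg m ((e' n) m)) = fun _ => (0:ℂ) := by
        funext m
        by_cases hm : m = n
        · subst hm
          rw [he']
          simp only
          rw [lp.single_apply_self]
          apply gg_zero_far
          rw [Complex.dist_eq]
          have h3 : (2 * ((tt m:ℝ):ℂ)) - ((tt m:ℝ):ℂ) = ((tt m:ℝ):ℂ) := by ring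
          rw [h3, Complex.norm_real, Real.norm_eq_abs, abs_of_pos (tt_pos m)]
          linarith [tt_pos m]
        · rw [he']
          simp only
          rw [lp.single_apply_ne 2 n _ hm]
          exact gg_zero m (by rw [norm_zero]; linarith [tt_pos m])
      rw [ff, this, tsum_zero]
    have he'2 : ∀ n, e' n = (2:ℝ) • e n := by
      intro n
      have h5 : ((2:ℝ) • ((tt n : ℝ):ℂ)) = 2 * ((tt n:ℝ) : ℂ) := by
        rw [Complex.real_smul]; push_cast; ring
      rw [he, he']
      simp only
      rw [← h5, lp.single_smul]
    have hev := (hte.eventually hsmall).and (hte'.eventually hsmall)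
    obtain ⟨n, hn1, hn2⟩ := hev.exists
    rw [zero_add, ff0, ffe, hnorm_e] at hn1
    rw [zero_add, ff0, ffe', hnorm_e', he'2, _root_.map_smul] at hn2
    have hL : ‖Lm (e n)‖ ≤ tt n / 4 := by
      have h4 : ‖(0:ℂ) - 0 - (2:ℝ) • Lm (e n)‖ = 2 * ‖Lm (e n)‖ := by
        rw [sub_sub, zero_sub, norm_neg, zero_add, norm_smul, Real.norm_eq_abs]
        norm_num
      rw [h4] at hn2
      linarith
    have hmain : ‖((tt n : ℝ) : ℂ) - 0 - Lm (e n)‖ ≤ 4⁻¹ * tt n := hn1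
    have : ‖((tt n : ℝ) : ℂ)‖ ≤ ‖((tt n : ℝ) : ℂ) - 0 - Lm (e n)‖ + ‖Lm (e n)‖ := by
      calc ‖((tt n : ℝ) : ℂ)‖ = ‖(((tt n : ℝ) : ℂ) - 0 - Lm (e n)) + Lm (e n)‖ := by ring_nf
        _ ≤ _ := norm_add_le _ _
    rw [Complex.norm_real, Real.norm_eq_abs, abs_of_pos (tt_pos n)] at this
    linarith [tt_pos n]

end
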